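/- arXiv:2605.18247 — 3 statements merged into one kernel-verified Lean document; each statement's English description precedes it below -/
import Mathlib

section
/- Let Ω ⊆ ℝ³ be open, and let ρ₁, ρ₂ : Ω × ℝ → ℝ be smooth and strictly positive, θ₁, θ₂ : Ω × ℝ → ℝ smooth, A : Ω × ℝ → ℝ³ a smooth vector field, B¹, B² : Ω × ℝ → ℝ smooth, and m, ħ, q constants with m, ħ > 0. Set φ = (θ₂ − θ₁)/ħ and suppose that ∂ₜρ₁ = −(1/m)·∇·(ρ₁(∇θ₁ − qA)) − (q·√(ρ₁ρ₂)/m)·(B¹ sin φ − B² cos φ) and ∂ₜρ₂ = −(1/m)·∇·(ρ₂(∇θ₂ − qA)) + (q·√(ρ₁ρ₂)/m)·(B¹ sin φ − B² cos φ) on Ω × ℝ. Then the total density ρ = ρ₁ + ρ₂ and the velocity field u = (ρ₁∇θ₁ + ρ₂∇θ₂)/(m·ρ) − (q/m)·A satisfy the continuity equation ∂ₜρ + ∇·(ρ·u) = 0 on Ω × ℝ. -/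
open Real

noncomputable section

/-- Space-time point: a point of ℝ³ together with a time. -/
abbrev P3 := (Fin 3 → ℝ) × ℝ

/-- Spatial partial derivative in the `i`-th coordinate direction. -/
noncomputable def pdx (i : Fin 3) (f : P3 → ℝ) (p : P3) : ℝ :=
  fderiv ℝ (fun x => f (x, p.2)) p.1 (Pi.single i 1)

/-- Time derivative. -/
noncomputable def pdt (f : P3 → ℝ) (p : P3) : ℝ :=
  deriv (fun t => f (p.1, t)) p.2

/-- Spatial divergence of a time-dependent vector field. -/
noncomputable def divx (v : P3 → Fin 3 → ℝ) (p : P3) : ℝ :=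
  ∑ i, pdx i (fun y => v y i) p

/-- **Continuity equation for the total density of the hydrodynamic Pauli system.**
If the polar components `ρ₁, ρ₂` of the spinor satisfy the two imaginary-part
equations of the Pauli equation, then the total density `ρ = ρ₁ + ρ₂` and the velocity
`u = (ρ₁∇θ₁ + ρ₂∇θ₂)/(mρ) - (q/m)A` satisfy `∂ₜρ + ∇·(ρu) = 0`. -/
theorem pauli_continuity
    (Ω : Set (Fin 3 → ℝ)) (hΩ : IsOpen Ω)
    (ρ₁ ρ₂ θ₁ θ₂ : P3 → ℝ) (A : P3 → Fin 3 → ℝ) (B1 B2 : P3 → ℝ)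
    (m hbar q : ℝ) (hm : 0 < m) (hhbar : 0 < hbar)
    (hρ₁s : ContDiffOn ℝ (⊤ : ℕ∞) ρ₁ (Ω ×ˢ Set.univ))
    (hρ₂s : ContDiffOn ℝ (⊤ : ℕ∞) ρ₂ (Ω ×ˢ Set.univ))
    (hθ₁s : ContDiffOn ℝ (⊤ : ℕ∞) θ₁ (Ω ×ˢ Set.univ))
    (hθ₂s : ContDiffOn ℝ (⊤ : ℕ∞) θ₂ (Ω ×ˢ Set.univ))
    (hAs : ContDiffOn ℝ (⊤ : ℕ∞) A (Ω ×ˢ Set.univ))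
    (hB1s : ContDiffOn ℝ (⊤ : ℕ∞) B1 (Ω ×ˢ Set.univ))
    (hB2s : ContDiffOn ℝ (⊤ : ℕ∞) B2 (Ω ×ˢ Set.univ))
    (hρ₁pos : ∀ p ∈ Ω ×ˢ (Set.univ : Set ℝ), 0 < ρ₁ p)
    (hρ₂pos : ∀ p ∈ Ω ×ˢ (Set.univ : Set ℝ), 0 < ρ₂ p)
    (φ : P3 → ℝ) (hφ : φ = fun p => (θ₂ p - θ₁ p) / hbar)
    (h1 : ∀ p ∈ Ω ×ˢ (Set.univ : Set ℝ),
      pdt ρ₁ p = -(1 / m) * divx (fun y i => ρ₁ y * (pdx i θ₁ y - q * A y i)) p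
        - q * Real.sqrt (ρ₁ p * ρ₂ p) / m
          * (B1 p * Real.sin (φ p) - B2 p * Real.cos (φ p)))
    (h2 : ∀ p ∈ Ω ×ˢ (Set.univ : Set ℝ),
      pdt ρ₂ p = -(1 / m) * divx (fun y i => ρ₂ y * (pdx i θ₂ y - q * A y i)) p
        + q * Real.sqrt (ρ₁ p * ρ₂ p) / m
          * (B1 p * Real.sin (φ p) - B2 p * Real.cos (φ p)))
    (ρ : P3 → ℝ) (hρ : ρ = fun p => ρ₁ p + ρ₂ p)
    (u : P3 → Fin 3 → ℝ)
    (hu : u = fun p i =>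
      (ρ₁ p * pdx i θ₁ p + ρ₂ p * pdx i θ₂ p) / (m * ρ p) - q / m * A p i) :
    ∀ p ∈ Ω ×ˢ (Set.univ : Set ℝ),
      pdt ρ p + divx (fun y i => ρ y * u y i) p = 0 := by
  intro p hp
  obtain ⟨hpΩ, -⟩ := hp
  have hopen : IsOpen (Ω ×ˢ (Set.univ : Set ℝ)) := hΩ.prod isOpen_univ
  set a := p.1 with ha
  set t := p.2 with ht
  -- freeze time: smoothness at spatial points
  have key : ∀ {E : Type} [NormedAddCommGroup E] [NormedSpace ℝ E]
      (f : P3 → E), ContDiffOn ℝ (⊤ : ℕ∞) f (Ω ×ˢ Set.univ) →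
      ∀ x ∈ Ω, ContDiffAt ℝ (⊤ : ℕ∞) (fun y => f (y, t)) x := by
    intro E _ _ f hf x hx
    have h1 : ContDiffAt ℝ (⊤ : ℕ∞) f (x, t) :=
      hf.contDiffAt (hopen.mem_nhds ⟨hx, trivial⟩)
    exact h1.comp x ((contDiff_id.prodMk contDiff_const).contDiffAt)
  -- differentiability of the x-derivative of a smooth function
  have keyD : ∀ (θ : P3 → ℝ), ContDiffOn ℝ (⊤ : ℕ∞) θ (Ω ×ˢ Set.univ) →
      ∀ (i : Fin 3), DifferentiableAt ℝ (fun x => pdx i θ (x, t)) a := by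
    intro θ hθ i
    have h1 : ContDiffAt ℝ (⊤ : ℕ∞) (fderiv ℝ (fun y => θ (y, t))) a :=
      (key θ hθ a hpΩ).fderiv_right (by simp)
    have h2 : ContDiffAt ℝ (⊤ : ℕ∞)
        (fun x => fderiv ℝ (fun y => θ (y, t)) x (Pi.single i 1)) a :=
      h1.clm_apply contDiffAt_const
    exact h2.differentiableAt (by simp)
  -- differentiability of the building blocks
  have hρ₁d : DifferentiableAt ℝ (fun x => ρ₁ (x, t)) a :=
    (key ρ₁ hρ₁s a hpΩ).differentiableAt (by simp)
  have hρ₂d : DifferentiableAt ℝ (fun x => ρ₂ (x, t)) a :=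
    (key ρ₂ hρ₂s a hpΩ).differentiableAt (by simp)
  have hAd : ∀ i : Fin 3, DifferentiableAt ℝ (fun x => A (x, t) i) a := by
    intro i
    exact ((contDiffAt_pi.1 (key A hAs a hpΩ)) i).differentiableAt (by simp)
  -- the flux vector fields from the hypotheses
  set v₁ : P3 → Fin 3 → ℝ := fun y i => ρ₁ y * (pdx i θ₁ y - q * A y i) with hv₁
  set v₂ : P3 → Fin 3 → ℝ := fun y i => ρ₂ y * (pdx i θ₂ y - q * A y i) with hv₂
  have hd1 : ∀ i : Fin 3, DifferentiableAt ℝ (fun x => v₁ (x, t) i) a := by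
    intro i
    exact hρ₁d.mul ((keyD θ₁ hθ₁s i).sub ((hAd i).const_mul q))
  have hd2 : ∀ i : Fin 3, DifferentiableAt ℝ (fun x => v₂ (x, t) i) a := by
    intro i
    exact hρ₂d.mul ((keyD θ₂ hθ₂s i).sub ((hAd i).const_mul q))
  -- divergence identity: div(ρu) = (1/m) div v₁ + (1/m) div v₂
  have hdiv : divx (fun y i => ρ y * u y i) p
      = (1 / m) * divx v₁ p + (1 / m) * divx v₂ p := by
    have hterm : ∀ i : Fin 3, pdx i (fun y => ρ y * u y i) p
        = (1 / m) * pdx i (fun y => v₁ y i) p + (1 / m) * pdx i (fun y => v₂ y i) p := by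
      intro i
      have heq : (fun x => ρ (x, t) * u (x, t) i)
          =ᶠ[nhds a] fun x => (1 / m) * v₁ (x, t) i + (1 / m) * v₂ (x, t) i := by
        filter_upwards [hΩ.mem_nhds hpΩ] with x hx
        have hp1 := hρ₁pos (x, t) ⟨hx, trivial⟩
        have hp2 := hρ₂pos (x, t) ⟨hx, trivial⟩
        have hρne : ρ₁ (x, t) + ρ₂ (x, t) ≠ 0 := by positivity
        rw [hu, hv₁, hv₂, hρ]
        dsimp only
        field_simp
        ring
      have hfd : pdx i (fun y => ρ y * u y i) p
          = fderiv ℝ (fun x => (1 / m) * v₁ (x, t) i + (1 / m) * v₂ (x, t) i) a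
              (Pi.single i 1) := by
        unfold pdx
        rw [heq.fderiv_eq]
      rw [hfd, fderiv_fun_add ((hd1 i).const_mul (1 / m)) ((hd2 i).const_mul (1 / m)),
        fderiv_const_mul (hd1 i) (1 / m), fderiv_const_mul (hd2 i) (1 / m)]
      simp [pdx]
      rfl
    unfold divx
    rw [Finset.mul_sum, Finset.mul_sum, ← Finset.sum_add_distrib]
    exact Finset.sum_congr rfl fun i _ => hterm i
  -- time derivative splits
  have hρ₁t : DifferentiableAt ℝ (fun s => ρ₁ (a, s)) t := by
    have hc : ContDiffAt ℝ (⊤ : ℕ∞) ρ₁ (a, t) :=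
      hρ₁s.contDiffAt (hopen.mem_nhds ⟨hpΩ, trivial⟩)
    exact (hc.comp t ((contDiff_const.prodMk contDiff_id).contDiffAt)).differentiableAt (by simp)
  have hρ₂t : DifferentiableAt ℝ (fun s => ρ₂ (a, s)) t := by
    have hc : ContDiffAt ℝ (⊤ : ℕ∞) ρ₂ (a, t) :=
      hρ₂s.contDiffAt (hopen.mem_nhds ⟨hpΩ, trivial⟩)
    exact (hc.comp t ((contDiff_const.prodMk contDiff_id).contDiffAt)).differentiableAt (by simp)
  have hpdt : pdt ρ p = pdt ρ₁ p + pdt ρ₂ p := by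
    unfold pdt
    rw [hρ]
    exact deriv_fun_add hρ₁t hρ₂t
  have e1 := h1 p ⟨hpΩ, trivial⟩
  have e2 := h2 p ⟨hpΩ, trivial⟩
  rw [hpdt, hdiv, e1, e2]
  ring

end
end

section
/- Let Ω ⊆ ℝ³ be open, and let ρ : Ω → ℝ be smooth with ρ > 0 and η : Ω → ℝ smooth with values in (0, π). Set ρ₁ = ρ·cos²(η/2) and ρ₂ = ρ·sin²(η/2). Then √ρ₁·Δ√ρ₁ + √ρ₂·Δ√ρ₂ = √ρ·Δ√ρ − (ρ/4)·|∇η|² on Ω. Equivalently, with the quantum potentials V_{qi} = −(ħ²/2m)·Δ√ρᵢ/√ρᵢ (i = 1, 2, ħ, m > 0), one has ρ₁·V_{q1} + ρ₂·V_{q2} = −(ħ²/2m)·√ρ·Δ√ρ + (ħ²/8m)·ρ·|∇η|². -/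
open Real

noncomputable section

/-- Partial derivative of a scalar function on ℝ³ in the `i`-th coordinate direction. -/
noncomputable def pd (i : Fin 3) (f : (Fin 3 → ℝ) → ℝ) (x : Fin 3 → ℝ) : ℝ :=
  fderiv ℝ f x (Pi.single i 1)

/-- Euclidean Laplacian of a scalar function on ℝ³. -/
noncomputable def lap (f : (Fin 3 → ℝ) → ℝ) (x : Fin 3 → ℝ) : ℝ :=
  ∑ i, pd i (fun y => pd i f y) x

lemma pd_congr {f g : (Fin 3 → ℝ) → ℝ} {U : Set (Fin 3 → ℝ)} {x : Fin 3 → ℝ}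
    (hU : IsOpen U) (hx : x ∈ U) (h : Set.EqOn f g U) (i : Fin 3) :
    pd i f x = pd i g x := by
  unfold pd
  rw [Filter.EventuallyEq.fderiv_eq (Filter.eventuallyEq_of_mem (hU.mem_nhds hx) h)]

lemma pd_add {f g : (Fin 3 → ℝ) → ℝ} {x : Fin 3 → ℝ} (hf : DifferentiableAt ℝ f x)
    (hg : DifferentiableAt ℝ g x) (i : Fin 3) :
    pd i (fun y => f y + g y) x = pd i f x + pd i g x := by
  unfold pd
  rw [fderiv_fun_add hf hg]
  simp

lemma pd_mul {f g : (Fin 3 → ℝ) → ℝ} {x : Fin 3 → ℝ} (hf : DifferentiableAt ℝ f x)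
    (hg : DifferentiableAt ℝ g x) (i : Fin 3) :
    pd i (fun y => f y * g y) x = pd i f x * g x + f x * pd i g x := by
  unfold pd
  rw [fderiv_fun_mul hf hg]
  simp
  ring

lemma pd_mul_const {f : (Fin 3 → ℝ) → ℝ} {x : Fin 3 → ℝ} (hf : DifferentiableAt ℝ f x)
    (c : ℝ) (i : Fin 3) :
    pd i (fun y => f y * c) x = pd i f x * c := by
  unfold pd
  rw [fderiv_mul_const hf]
  simp [mul_comm]

lemma pd_cos_half {η : (Fin 3 → ℝ) → ℝ} {x : Fin 3 → ℝ} (hη : DifferentiableAt ℝ η x)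
    (i : Fin 3) :
    pd i (fun y => Real.cos (η y / 2)) x = -(Real.sin (η x / 2)) * pd i η x / 2 := by
  have hφ : HasDerivAt (fun s : ℝ => Real.cos (s / 2)) (-Real.sin (η x / 2) * (1 / 2)) (η x) :=
    ((hasDerivAt_id (η x)).div_const 2).cos
  have h2 : HasFDerivAt (fun y => Real.cos (η y / 2))
      ((-Real.sin (η x / 2) * (1 / 2)) • fderiv ℝ η x) x :=
    hφ.comp_hasFDerivAt x hη.hasFDerivAt
  have h3 : pd i (fun y => Real.cos (η y / 2)) x
      = (-Real.sin (η x / 2) * (1 / 2)) * pd i η x := by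
    unfold pd
    rw [h2.fderiv]
    simp
  rw [h3]; ring

lemma pd_sin_half {η : (Fin 3 → ℝ) → ℝ} {x : Fin 3 → ℝ} (hη : DifferentiableAt ℝ η x)
    (i : Fin 3) :
    pd i (fun y => Real.sin (η y / 2)) x = Real.cos (η x / 2) * pd i η x / 2 := by
  have hφ : HasDerivAt (fun s : ℝ => Real.sin (s / 2)) (Real.cos (η x / 2) * (1 / 2)) (η x) :=
    ((hasDerivAt_id (η x)).div_const 2).sin
  have h2 : HasFDerivAt (fun y => Real.sin (η y / 2))
      ((Real.cos (η x / 2) * (1 / 2)) • fderiv ℝ η x) x :=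
    hφ.comp_hasFDerivAt x hη.hasFDerivAt
  have h3 : pd i (fun y => Real.sin (η y / 2)) x
      = (Real.cos (η x / 2) * (1 / 2)) * pd i η x := by
    unfold pd
    rw [h2.fderiv]
    simp
  rw [h3]; ring


lemma aux_div (K L A : ℝ) (hA : 0 < A) : A * (K * L / Real.sqrt A) = K * (Real.sqrt A * L) := by
  set b := Real.sqrt A with hb
  have hbpos : 0 < b := Real.sqrt_pos.mpr hA
  have h2 : A = b * b := (Real.mul_self_sqrt hA.le).symm
  rw [h2]
  field_simp



/-- **Sum of the two quantum potentials.**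
With `ρ₁ = ρ cos²(η/2)` and `ρ₂ = ρ sin²(η/2)` one has, on Ω,
`√ρ₁ Δ√ρ₁ + √ρ₂ Δ√ρ₂ = √ρ Δ√ρ - (ρ/4)|∇η|²`, and equivalently, with
`V_{qi} = -(ħ²/2m) Δ√ρᵢ/√ρᵢ`,
`ρ₁ V_{q1} + ρ₂ V_{q2} = -(ħ²/2m)√ρ Δ√ρ + (ħ²/8m) ρ |∇η|²`. -/
theorem quantum_potential_sum
    (Ω : Set (Fin 3 → ℝ)) (hΩ : IsOpen Ω)
    (ρ η : (Fin 3 → ℝ) → ℝ)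
    (hρ : ContDiffOn ℝ (⊤ : ℕ∞) ρ Ω) (hρpos : ∀ x ∈ Ω, 0 < ρ x)
    (hη : ContDiffOn ℝ (⊤ : ℕ∞) η Ω) (hηval : ∀ x ∈ Ω, η x ∈ Set.Ioo 0 π)
    (hbar m : ℝ) (hhbar : 0 < hbar) (hm : 0 < m)
    (ρ₁ ρ₂ : (Fin 3 → ℝ) → ℝ)
    (hρ₁ : ρ₁ = fun y => ρ y * Real.cos (η y / 2) ^ 2)
    (hρ₂ : ρ₂ = fun y => ρ y * Real.sin (η y / 2) ^ 2) :
    ∀ x ∈ Ω,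
      (Real.sqrt (ρ₁ x) * lap (fun y => Real.sqrt (ρ₁ y)) x
          + Real.sqrt (ρ₂ x) * lap (fun y => Real.sqrt (ρ₂ y)) x
        = Real.sqrt (ρ x) * lap (fun y => Real.sqrt (ρ y)) x
          - ρ x / 4 * ∑ i, (pd i η x) ^ 2) ∧
      (ρ₁ x * (-(hbar ^ 2 / (2 * m)) * lap (fun y => Real.sqrt (ρ₁ y)) x
            / Real.sqrt (ρ₁ x))
          + ρ₂ x * (-(hbar ^ 2 / (2 * m)) * lap (fun y => Real.sqrt (ρ₂ y)) x
            / Real.sqrt (ρ₂ x))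
        = -(hbar ^ 2 / (2 * m)) * Real.sqrt (ρ x) * lap (fun y => Real.sqrt (ρ y)) x
          + hbar ^ 2 / (8 * m) * ρ x * ∑ i, (pd i η x) ^ 2) := by
  intro x hx
  have hπ := Real.pi_pos
  -- positivity of the trig factors on Ω
  have hcpos : ∀ y ∈ Ω, 0 < Real.cos (η y / 2) := by
    intro y hy
    exact Real.cos_pos_of_mem_Ioo
      ⟨by linarith [(hηval y hy).1, hπ], by linarith [(hηval y hy).2]⟩
  have hspos : ∀ y ∈ Ω, 0 < Real.sin (η y / 2) := by
    intro y hy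
    exact Real.sin_pos_of_pos_of_lt_pi (by linarith [(hηval y hy).1])
      (by linarith [(hηval y hy).2, hπ])
  -- smoothness package
  have cρ : ∀ y ∈ Ω, ContDiffAt ℝ 2 ρ y := fun y hy =>
    (hρ.contDiffAt (hΩ.mem_nhds hy)).of_le (WithTop.coe_le_coe.2 le_top)
  have cη2 : ∀ y ∈ Ω, ContDiffAt ℝ 2 η y := fun y hy =>
    (hη.contDiffAt (hΩ.mem_nhds hy)).of_le (WithTop.coe_le_coe.2 le_top)
  have dη : ∀ y ∈ Ω, DifferentiableAt ℝ η y := fun y hy =>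
    (cη2 y hy).differentiableAt two_ne_zero
  have cg : ∀ y ∈ Ω, ContDiffAt ℝ 2 (fun z => Real.sqrt (ρ z)) y := fun y hy =>
    (Real.contDiffAt_sqrt (hρpos y hy).ne').comp y (cρ y hy)
  have dg : ∀ y ∈ Ω, DifferentiableAt ℝ (fun z => Real.sqrt (ρ z)) y := fun y hy =>
    (cg y hy).differentiableAt two_ne_zero
  have dcc : ∀ y ∈ Ω, DifferentiableAt ℝ (fun z => Real.cos (η z / 2)) y := by
    intro y hy
    have h : DifferentiableAt ℝ (fun z => η z / 2) y := by
      simpa [div_eq_mul_inv] using (dη y hy).mul_const (2:ℝ)⁻¹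
    exact (Real.differentiable_cos.differentiableAt).comp y h
  have dss : ∀ y ∈ Ω, DifferentiableAt ℝ (fun z => Real.sin (η z / 2)) y := by
    intro y hy
    have h : DifferentiableAt ℝ (fun z => η z / 2) y := by
      simpa [div_eq_mul_inv] using (dη y hy).mul_const (2:ℝ)⁻¹
    exact (Real.differentiable_sin.differentiableAt).comp y h
  have dpdg : ∀ (i : Fin 3), ∀ y ∈ Ω, DifferentiableAt ℝ (fun z => pd i (fun w => Real.sqrt (ρ w)) z) y := by
    intro i y hy
    have h1 : ContDiffAt ℝ 1 (fderiv ℝ (fun z => Real.sqrt (ρ z))) y :=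
      (cg y hy).fderiv_right (by norm_num)
    have h2 : ContDiffAt ℝ 1 (fun z => fderiv ℝ (fun w => Real.sqrt (ρ w)) z (Pi.single i 1)) y :=
      h1.clm_apply contDiffAt_const
    exact h2.differentiableAt one_ne_zero
  have dpdη : ∀ (i : Fin 3), ∀ y ∈ Ω, DifferentiableAt ℝ (fun z => pd i η z) y := by
    intro i y hy
    have h1 : ContDiffAt ℝ 1 (fderiv ℝ η) y := (cη2 y hy).fderiv_right (by norm_num)
    have h2 : ContDiffAt ℝ 1 (fun z => fderiv ℝ η z (Pi.single i 1)) y :=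
      h1.clm_apply contDiffAt_const
    exact h2.differentiableAt one_ne_zero
  -- the two square roots factor on Ω
  have e1 : Set.EqOn (fun y => Real.sqrt (ρ₁ y))
      (fun y => Real.sqrt (ρ y) * Real.cos (η y / 2)) Ω := by
    intro y hy
    show Real.sqrt (ρ₁ y) = Real.sqrt (ρ y) * Real.cos (η y / 2)
    simp only [hρ₁]
    rw [Real.sqrt_mul (hρpos y hy).le, Real.sqrt_sq (hcpos y hy).le]
  have e1' : Set.EqOn (fun y => Real.sqrt (ρ₂ y))
      (fun y => Real.sqrt (ρ y) * Real.sin (η y / 2)) Ω := by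
    intro y hy
    show Real.sqrt (ρ₂ y) = Real.sqrt (ρ y) * Real.sin (η y / 2)
    simp only [hρ₂]
    rw [Real.sqrt_mul (hρpos y hy).le, Real.sqrt_sq (hspos y hy).le]
  -- first derivatives on Ω
  have e2 : ∀ i : Fin 3, Set.EqOn (fun y => pd i (fun z => Real.sqrt (ρ₁ z)) y)
      (fun y => pd i (fun z => Real.sqrt (ρ z)) y * Real.cos (η y / 2)
        + Real.sqrt (ρ y) * Real.sin (η y / 2) * pd i η y * (-(1/2) : ℝ)) Ω := by
    intro i y hy
    show pd i (fun z => Real.sqrt (ρ₁ z)) y = _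
    rw [pd_congr hΩ hy e1 i, pd_mul (dg y hy) (dcc y hy) i, pd_cos_half (dη y hy) i]
    ring
  have e2' : ∀ i : Fin 3, Set.EqOn (fun y => pd i (fun z => Real.sqrt (ρ₂ z)) y)
      (fun y => pd i (fun z => Real.sqrt (ρ z)) y * Real.sin (η y / 2)
        + Real.sqrt (ρ y) * Real.cos (η y / 2) * pd i η y * ((1/2) : ℝ)) Ω := by
    intro i y hy
    show pd i (fun z => Real.sqrt (ρ₂ z)) y = _
    rw [pd_congr hΩ hy e1' i, pd_mul (dg y hy) (dss y hy) i, pd_sin_half (dη y hy) i]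
    ring
  -- the two Laplacians at x
  have lap1 : lap (fun y => Real.sqrt (ρ₁ y)) x = ∑ i,
      (pd i (fun z => pd i (fun w => Real.sqrt (ρ w)) z) x * Real.cos (η x / 2)
        + pd i (fun w => Real.sqrt (ρ w)) x * (-(Real.sin (η x / 2)) * pd i η x / 2)
        + ((pd i (fun w => Real.sqrt (ρ w)) x * Real.sin (η x / 2)
            + Real.sqrt (ρ x) * (Real.cos (η x / 2) * pd i η x / 2)) * pd i η x
          + Real.sqrt (ρ x) * Real.sin (η x / 2) * pd i (fun z => pd i η z) x) * (-(1/2))) := by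
    unfold lap
    refine Finset.sum_congr rfl fun i _ => ?_
    rw [pd_congr hΩ hx (e2 i) i]
    have hF : DifferentiableAt ℝ
        (fun y => pd i (fun z => Real.sqrt (ρ z)) y * Real.cos (η y / 2)) x :=
      (dpdg i x hx).mul (dcc x hx)
    have hgss : DifferentiableAt ℝ (fun y => Real.sqrt (ρ y) * Real.sin (η y / 2)) x :=
      (dg x hx).mul (dss x hx)
    have hgssH : DifferentiableAt ℝ
        (fun y => Real.sqrt (ρ y) * Real.sin (η y / 2) * pd i η y) x :=
      hgss.mul (dpdη i x hx)
    have hK : DifferentiableAt ℝ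
        (fun y => Real.sqrt (ρ y) * Real.sin (η y / 2) * pd i η y * (-(1/2) : ℝ)) x :=
      hgssH.mul_const _
    rw [pd_add hF hK i, pd_mul (dpdg i x hx) (dcc x hx) i,
      pd_mul_const hgssH (-(1/2) : ℝ) i, pd_mul hgss (dpdη i x hx) i,
      pd_mul (dg x hx) (dss x hx) i, pd_cos_half (dη x hx) i, pd_sin_half (dη x hx) i]
  have lap2 : lap (fun y => Real.sqrt (ρ₂ y)) x = ∑ i,
      (pd i (fun z => pd i (fun w => Real.sqrt (ρ w)) z) x * Real.sin (η x / 2)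
        + pd i (fun w => Real.sqrt (ρ w)) x * (Real.cos (η x / 2) * pd i η x / 2)
        + ((pd i (fun w => Real.sqrt (ρ w)) x * Real.cos (η x / 2)
            + Real.sqrt (ρ x) * (-(Real.sin (η x / 2)) * pd i η x / 2)) * pd i η x
          + Real.sqrt (ρ x) * Real.cos (η x / 2) * pd i (fun z => pd i η z) x) * ((1/2))) := by
    unfold lap
    refine Finset.sum_congr rfl fun i _ => ?_
    rw [pd_congr hΩ hx (e2' i) i]
    have hF : DifferentiableAt ℝ
        (fun y => pd i (fun z => Real.sqrt (ρ z)) y * Real.sin (η y / 2)) x :=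
      (dpdg i x hx).mul (dss x hx)
    have hgcc : DifferentiableAt ℝ (fun y => Real.sqrt (ρ y) * Real.cos (η y / 2)) x :=
      (dg x hx).mul (dcc x hx)
    have hgccH : DifferentiableAt ℝ
        (fun y => Real.sqrt (ρ y) * Real.cos (η y / 2) * pd i η y) x :=
      hgcc.mul (dpdη i x hx)
    have hK : DifferentiableAt ℝ
        (fun y => Real.sqrt (ρ y) * Real.cos (η y / 2) * pd i η y * ((1/2) : ℝ)) x :=
      hgccH.mul_const _
    rw [pd_add hF hK i, pd_mul (dpdg i x hx) (dss x hx) i,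
      pd_mul_const hgccH ((1/2) : ℝ) i, pd_mul hgcc (dpdη i x hx) i,
      pd_mul (dg x hx) (dcc x hx) i, pd_sin_half (dη x hx) i, pd_cos_half (dη x hx) i]
  have v1 : Real.sqrt (ρ₁ x) = Real.sqrt (ρ x) * Real.cos (η x / 2) := e1 hx
  have v2 : Real.sqrt (ρ₂ x) = Real.sqrt (ρ x) * Real.sin (η x / 2) := e1' hx
  have hpyth : Real.cos (η x / 2) ^ 2 + Real.sin (η x / 2) ^ 2 = 1 := Real.cos_sq_add_sin_sq _
  have ha2 : Real.sqrt (ρ x) * Real.sqrt (ρ x) = ρ x := Real.mul_self_sqrt (hρpos x hx).le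
  have hmain : Real.sqrt (ρ₁ x) * lap (fun y => Real.sqrt (ρ₁ y)) x
      + Real.sqrt (ρ₂ x) * lap (fun y => Real.sqrt (ρ₂ y)) x
      = Real.sqrt (ρ x) * lap (fun y => Real.sqrt (ρ y)) x
        - ρ x / 4 * ∑ i, (pd i η x) ^ 2 := by
    rw [v1, v2, lap1, lap2]
    unfold lap
    rw [Finset.mul_sum, Finset.mul_sum, Finset.mul_sum, Finset.mul_sum,
      ← Finset.sum_add_distrib, ← Finset.sum_sub_distrib]
    refine Finset.sum_congr rfl fun i _ => ?_
    linear_combination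
      (Real.sqrt (ρ x) * pd i (fun z => pd i (fun w => Real.sqrt (ρ w)) z) x
        - Real.sqrt (ρ x) * Real.sqrt (ρ x) * pd i η x ^ 2 / 4) * hpyth
      - pd i η x ^ 2 / 4 * ha2
  refine ⟨hmain, ?_⟩
  have hρ1x : 0 < ρ₁ x := by
    simp only [hρ₁]; exact mul_pos (hρpos x hx) (pow_pos (hcpos x hx) 2)
  have hρ2x : 0 < ρ₂ x := by
    simp only [hρ₂]; exact mul_pos (hρpos x hx) (pow_pos (hspos x hx) 2)
  rw [aux_div (-(hbar ^ 2 / (2 * m))) (lap (fun y => Real.sqrt (ρ₁ y)) x) (ρ₁ x) hρ1x,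
    aux_div (-(hbar ^ 2 / (2 * m))) (lap (fun y => Real.sqrt (ρ₂ y)) x) (ρ₂ x) hρ2x,
    ← mul_add, hmain]
  have hm' : m ≠ 0 := hm.ne'
  field_simp
  ring

end
end

section
/- Let Ω ⊆ ℝ³ be open, let ρ₁, ρ₂, θ₁, θ₂ : Ω × ℝ → ℝ be smooth with ρ₁, ρ₂ > 0, let A : Ω × ℝ → ℝ³ and B¹, B² : Ω × ℝ → ℝ be smooth, and let m, ħ, q be constants with m, ħ > 0. Set φ = (θ₂ − θ₁)/ħ, ρ = ρ₁ + ρ₂, u = (ρ₁∇θ₁ + ρ₂∇θ₂)/(mρ) − (q/m)A, and let η : Ω × ℝ → (0, π) be the smooth function with ρ₁ = ρ·cos²(η/2) and ρ₂ = ρ·sin²(η/2). Assume ∂ₜρ₁ = −(1/m)·∇·(ρ₁(∇θ₁ − qA)) − (q√(ρ₁ρ₂)/m)·(B¹ sin φ − B² cos φ) and ∂ₜρ₂ = −(1/m)·∇·(ρ₂(∇θ₂ − qA)) + (q√(ρ₁ρ₂)/m)·(B¹ sin φ − B² cos φ). Then ∂ₜη + u·∇η = −(ħ/(2mρ·sin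 η))·∇·(ρ·sin²η·∇φ) + (q/m)·(B¹ sin φ − B² cos φ). -/
open Real

noncomputable section

lemma pdx_fderiv {f : P3 → ℝ} {p : P3} (hf : DifferentiableAt ℝ f p) (i : Fin 3) :
    pdx i f p = fderiv ℝ f p (Pi.single i 1, 0) := by
  have hg : HasFDerivAt (fun x : Fin 3 → ℝ => (x, p.2))
      ((ContinuousLinearMap.id ℝ (Fin 3 → ℝ)).prod (0 : (Fin 3 → ℝ) →L[ℝ] ℝ)) p.1 :=
    (hasFDerivAt_id p.1).prodMk (hasFDerivAt_const p.2 p.1)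
  have hcomp : HasFDerivAt (fun x : Fin 3 → ℝ => f (x, p.2))
      ((fderiv ℝ f p).comp ((ContinuousLinearMap.id ℝ (Fin 3 → ℝ)).prod 0)) p.1 := by
    have hf' : HasFDerivAt f (fderiv ℝ f p) ((p.1, p.2) : P3) := by
      simpa using hf.hasFDerivAt
    exact hf'.comp p.1 hg
  rw [pdx, hcomp.fderiv]
  simp

lemma pdt_fderiv {f : P3 → ℝ} {p : P3} (hf : DifferentiableAt ℝ f p) :
    pdt f p = fderiv ℝ f p (0, 1) := by
  have hg : HasDerivAt (fun t : ℝ => ((p.1, t) : P3)) ((0 : Fin 3 → ℝ), (1 : ℝ)) p.2 :=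
    (hasDerivAt_const p.2 p.1).prodMk (hasDerivAt_id p.2)
  have hf' : HasFDerivAt f (fderiv ℝ f p) ((p.1, p.2) : P3) := by
    simpa using hf.hasFDerivAt
  have hcomp : HasDerivAt (fun t : ℝ => f (p.1, t)) (fderiv ℝ f p (0, 1)) p.2 :=
    hf'.comp_hasDerivAt p.2 hg
  rw [pdt, hcomp.deriv]

lemma pdx_congr {f g : P3 → ℝ} {p : P3} (h : f =ᶠ[nhds p] g) (i : Fin 3) :
    pdx i f p = pdx i g p := by
  have ht : Filter.Tendsto (fun x : Fin 3 → ℝ => ((x, p.2) : P3)) (nhds p.1) (nhds p) := by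
    have : Filter.Tendsto (fun x : Fin 3 → ℝ => ((x, p.2) : P3)) (nhds p.1) (nhds (p.1, p.2)) :=
      (continuous_id.prodMk continuous_const).tendsto p.1
    simpa using this
  have h2 : (fun x : Fin 3 → ℝ => f (x, p.2)) =ᶠ[nhds p.1] (fun x => g (x, p.2)) :=
    h.comp_tendsto ht
  rw [pdx, pdx, h2.fderiv_eq]

lemma contDiffOn_pdx {U : Set P3} (hU : IsOpen U) {f : P3 → ℝ}
    (hf : ContDiffOn ℝ (⊤ : ℕ∞) f U) (i : Fin 3) :
    ContDiffOn ℝ (⊤ : ℕ∞) (fun y => pdx i f y) U := by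
  have h1 : ContDiffOn ℝ (⊤ : ℕ∞) (fun y => fderiv ℝ f y) U :=
    hf.fderiv_of_isOpen hU (by exact_mod_cast le_top)
  have h2 : ContDiffOn ℝ (⊤ : ℕ∞) (fun y => fderiv ℝ f y ((Pi.single i 1 : Fin 3 → ℝ), (0:ℝ))) U :=
    h1.clm_apply contDiffOn_const
  refine h2.congr fun y hy => ?_
  exact pdx_fderiv ((hf.differentiableOn (by simp)).differentiableAt (hU.mem_nhds hy)) i

lemma diffAt {U : Set P3} (hU : IsOpen U) {f : P3 → ℝ}
    (hf : ContDiffOn ℝ (⊤ : ℕ∞) f U) {p : P3} (hp : p ∈ U) : DifferentiableAt ℝ f p :=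
  (hf.differentiableOn (by simp)).differentiableAt (hU.mem_nhds hp)

lemma pdx_mul (f g : P3 → ℝ) {p : P3} (hf : DifferentiableAt ℝ f p)
    (hg : DifferentiableAt ℝ g p) (i : Fin 3) :
    pdx i (fun y => f y * g y) p = pdx i f p * g p + f p * pdx i g p := by
  rw [pdx_fderiv (hf.fun_mul hg) i, pdx_fderiv hf i, pdx_fderiv hg i, fderiv_fun_mul hf hg]
  simp only [ContinuousLinearMap.add_apply, ContinuousLinearMap.smul_apply, smul_eq_mul]
  ring

lemma pdx_sub (f g : P3 → ℝ) {p : P3} (hf : DifferentiableAt ℝ f p)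
    (hg : DifferentiableAt ℝ g p) (i : Fin 3) :
    pdx i (fun y => f y - g y) p = pdx i f p - pdx i g p := by
  rw [pdx_fderiv (hf.fun_sub hg) i, pdx_fderiv hf i, pdx_fderiv hg i, fderiv_fun_sub hf hg]
  simp

lemma pdx_const_mul (f : P3 → ℝ) (c : ℝ) {p : P3} (hf : DifferentiableAt ℝ f p) (i : Fin 3) :
    pdx i (fun y => c * f y) p = c * pdx i f p := by
  rw [pdx_fderiv (hf.const_mul c) i, pdx_fderiv hf i, fderiv_const_mul hf c]
  simp

lemma pdx_div_const (f : P3 → ℝ) (c : ℝ) {p : P3} (hf : DifferentiableAt ℝ f p) (i : Fin 3) :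
    pdx i (fun y => f y / c) p = pdx i f p / c := by
  simp only [div_eq_inv_mul]
  exact pdx_const_mul f c⁻¹ hf i

lemma pdx_comp (f : P3 → ℝ) (g : ℝ → ℝ) (g' : ℝ) {p : P3}
    (hg : HasDerivAt g g' (f p)) (hf : DifferentiableAt ℝ f p) (i : Fin 3) :
    pdx i (fun y => g (f y)) p = g' * pdx i f p := by
  have h : HasFDerivAt (fun y => g (f y)) (g' • fderiv ℝ f p) p :=
    hg.comp_hasFDerivAt p hf.hasFDerivAt
  rw [pdx_fderiv h.differentiableAt i, h.fderiv, pdx_fderiv hf i]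
  simp

lemma key_fderiv {f ρ η : P3 → ℝ} {p : P3} {g : ℝ → ℝ} {g' : ℝ}
    (hf : f =ᶠ[nhds p] fun y => ρ y * g (η y))
    (hρ : DifferentiableAt ℝ ρ p) (hη : DifferentiableAt ℝ η p)
    (hg : HasDerivAt g g' (η p)) (v : P3) :
    fderiv ℝ f p v = g (η p) * fderiv ℝ ρ p v + (ρ p * g') * fderiv ℝ η p v := by
  have h1 : HasFDerivAt (fun y => g (η y)) (g' • fderiv ℝ η p) p :=
    hg.comp_hasFDerivAt p hη.hasFDerivAt
  have h2 : HasFDerivAt (fun y => ρ y * g (η y))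
      (ρ p • (g' • fderiv ℝ η p) + g (η p) • fderiv ℝ ρ p) p :=
    hρ.hasFDerivAt.mul h1
  rw [hf.fderiv_eq, h2.fderiv]
  simp only [ContinuousLinearMap.add_apply, ContinuousLinearMap.smul_apply, smul_eq_mul]
  ring

lemma assemble (m hbar q R s c sE G S1 S2 SN SP dte dt1 dt2 Su DIV : ℝ)
    (hm : m ≠ 0) (hbar0 : hbar ≠ 0) (hR : R ≠ 0) (hs : s ≠ 0) (hc : c ≠ 0)
    (hsE : sE = 2 * (s * c)) (pyth : s ^ 2 + c ^ 2 = 1)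
    (hdte : R * (s * c) * dte = c ^ 2 * dt2 - s ^ 2 * dt1)
    (h1p : dt1 = -(1 / m) * S1 - q * (R * (s * c)) / m * G)
    (h2p : dt2 = -(1 / m) * S2 + q * (R * (s * c)) / m * G)
    (hsum : 4 * (s ^ 2 * S1 - c ^ 2 * S2 + (s * c) * SN) = -SP)
    (hSu : Su = SN / (m * R))
    (hDIV : DIV = SP / hbar) :
    dte + Su = -(hbar / (2 * m * R * sE)) * DIV + q / m * G := by
  have hsc : s * c ≠ 0 := mul_ne_zero hs hc
  have h4 : (4 * m * R * (s * c)) ≠ 0 := by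
    exact mul_ne_zero (mul_ne_zero (mul_ne_zero four_ne_zero hm) hR) hsc
  have hdte2 : dte = (c ^ 2 * dt2 - s ^ 2 * dt1) / (R * (s * c)) := by
    rw [eq_div_iff (mul_ne_zero hR hsc)]
    linear_combination hdte
  have e2 : (4 * m * R * (s * c)) * (dte + Su)
      = 4 * (s ^ 2 * S1 - c ^ 2 * S2 + (s * c) * SN) + 4 * q * R * (s * c) * (s ^ 2 + c ^ 2) * G := by
    rw [hdte2, h1p, h2p, hSu]
    field_simp
    ring
  have e3 : (4 * m * R * (s * c)) * (-(hbar / (2 * m * R * sE)) * DIV + q / m * G)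
      = -SP + 4 * q * R * (s * c) * G := by
    rw [hDIV, hsE]
    field_simp
    ring
  have e4 : 4 * (s ^ 2 * S1 - c ^ 2 * S2 + (s * c) * SN) + 4 * q * R * (s * c) * (s ^ 2 + c ^ 2) * G
      = -SP + 4 * q * R * (s * c) * G := by
    rw [hsum, pyth]; ring
  exact mul_left_cancel₀ h4 (by rw [e2, e4, ← e3])
/-- **Evolution equation for the polar spin angle η.**
From the imaginary parts of the Pauli equation for the polar components
`Ψᵢ = √ρᵢ e^{iθᵢ/ħ}`, the polar spin angle `η` (with `ρ₁ = ρ cos²(η/2)`,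
`ρ₂ = ρ sin²(η/2)`) satisfies
`∂ₜη + u·∇η = -(ħ/(2mρ sin η)) ∇·(ρ sin²η ∇φ) + (q/m)(B¹ sin φ - B² cos φ)`. -/
theorem eta_evolution
    (Ω : Set (Fin 3 → ℝ)) (hΩ : IsOpen Ω)
    (ρ₁ ρ₂ θ₁ θ₂ : P3 → ℝ) (A : P3 → Fin 3 → ℝ) (B1 B2 : P3 → ℝ)
    (m hbar q : ℝ) (hm : 0 < m) (hhbar : 0 < hbar)
    (hρ₁s : ContDiffOn ℝ (⊤ : ℕ∞) ρ₁ (Ω ×ˢ Set.univ))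
    (hρ₂s : ContDiffOn ℝ (⊤ : ℕ∞) ρ₂ (Ω ×ˢ Set.univ))
    (hθ₁s : ContDiffOn ℝ (⊤ : ℕ∞) θ₁ (Ω ×ˢ Set.univ))
    (hθ₂s : ContDiffOn ℝ (⊤ : ℕ∞) θ₂ (Ω ×ˢ Set.univ))
    (hAs : ContDiffOn ℝ (⊤ : ℕ∞) A (Ω ×ˢ Set.univ))
    (hB1s : ContDiffOn ℝ (⊤ : ℕ∞) B1 (Ω ×ˢ Set.univ))
    (hB2s : ContDiffOn ℝ (⊤ : ℕ∞) B2 (Ω ×ˢ Set.univ))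
    (hρ₁pos : ∀ p ∈ Ω ×ˢ (Set.univ : Set ℝ), 0 < ρ₁ p)
    (hρ₂pos : ∀ p ∈ Ω ×ˢ (Set.univ : Set ℝ), 0 < ρ₂ p)
    (φ : P3 → ℝ) (hφ : φ = fun p => (θ₂ p - θ₁ p) / hbar)
    (ρ : P3 → ℝ) (hρ : ρ = fun p => ρ₁ p + ρ₂ p)
    (u : P3 → Fin 3 → ℝ)
    (hu : u = fun p i =>
      (ρ₁ p * pdx i θ₁ p + ρ₂ p * pdx i θ₂ p) / (m * ρ p) - q / m * A p i)
    (η : P3 → ℝ)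
    (hηs : ContDiffOn ℝ (⊤ : ℕ∞) η (Ω ×ˢ Set.univ))
    (hηval : ∀ p ∈ Ω ×ˢ (Set.univ : Set ℝ), η p ∈ Set.Ioo 0 π)
    (hη₁ : ∀ p ∈ Ω ×ˢ (Set.univ : Set ℝ), ρ₁ p = ρ p * Real.cos (η p / 2) ^ 2)
    (hη₂ : ∀ p ∈ Ω ×ˢ (Set.univ : Set ℝ), ρ₂ p = ρ p * Real.sin (η p / 2) ^ 2)
    (h1 : ∀ p ∈ Ω ×ˢ (Set.univ : Set ℝ),
      pdt ρ₁ p = -(1 / m) * divx (fun y i => ρ₁ y * (pdx i θ₁ y - q * A y i)) p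
        - q * Real.sqrt (ρ₁ p * ρ₂ p) / m
          * (B1 p * Real.sin (φ p) - B2 p * Real.cos (φ p)))
    (h2 : ∀ p ∈ Ω ×ˢ (Set.univ : Set ℝ),
      pdt ρ₂ p = -(1 / m) * divx (fun y i => ρ₂ y * (pdx i θ₂ y - q * A y i)) p
        + q * Real.sqrt (ρ₁ p * ρ₂ p) / m
          * (B1 p * Real.sin (φ p) - B2 p * Real.cos (φ p))) :
    ∀ p ∈ Ω ×ˢ (Set.univ : Set ℝ),
      pdt η p + (∑ i, u p i * pdx i η p)
        = -(hbar / (2 * m * ρ p * Real.sin (η p)))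
            * divx (fun y i => ρ y * Real.sin (η y) ^ 2 * pdx i φ y) p
          + q / m * (B1 p * Real.sin (φ p) - B2 p * Real.cos (φ p)) := by
  intro p hp
  have hU : IsOpen (Ω ×ˢ (Set.univ : Set ℝ)) := hΩ.prod isOpen_univ
  -- smoothness of derived functions
  have hρs : ContDiffOn ℝ (⊤ : ℕ∞) ρ (Ω ×ˢ Set.univ) := by
    rw [hρ]; exact hρ₁s.add hρ₂s
  have hφs : ContDiffOn ℝ (⊤ : ℕ∞) φ (Ω ×ˢ Set.univ) := by
    rw [hφ]; exact (hθ₂s.sub hθ₁s).div_const hbar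
  have hAi : ∀ i : Fin 3, ContDiffOn ℝ (⊤ : ℕ∞) (fun y => A y i) (Ω ×ˢ Set.univ) := fun i =>
    (ContinuousLinearMap.proj (R := ℝ) (φ := fun _ : Fin 3 => ℝ) i).contDiff.comp_contDiffOn hAs
  -- differentiability at p
  have dρ₁ : DifferentiableAt ℝ ρ₁ p := diffAt hU hρ₁s hp
  have dρ₂ : DifferentiableAt ℝ ρ₂ p := diffAt hU hρ₂s hp
  have dη : DifferentiableAt ℝ η p := diffAt hU hηs hp
  have dρ : DifferentiableAt ℝ ρ p := diffAt hU hρs hp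
  have dA : ∀ i, DifferentiableAt ℝ (fun y => A y i) p := fun i => diffAt hU (hAi i) hp
  have dGθ₁ : ∀ i, DifferentiableAt ℝ (fun y => pdx i θ₁ y) p := fun i =>
    diffAt hU (contDiffOn_pdx hU hθ₁s i) hp
  have dGθ₂ : ∀ i, DifferentiableAt ℝ (fun y => pdx i θ₂ y) p := fun i =>
    diffAt hU (contDiffOn_pdx hU hθ₂s i) hp
  have dGφ : ∀ i, DifferentiableAt ℝ (fun y => pdx i φ y) p := fun i =>
    diffAt hU (contDiffOn_pdx hU hφs i) hp
  have dsin2 : DifferentiableAt ℝ (fun y => Real.sin (η y) ^ 2) p := dη.sin.pow 2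
  -- basic scalar facts
  have hEmem := hηval p hp
  have hspos : 0 < Real.sin (η p / 2) :=
    Real.sin_pos_of_pos_of_lt_pi (by linarith [hEmem.1]) (by linarith [hEmem.2, Real.pi_pos])
  have hcpos : 0 < Real.cos (η p / 2) :=
    Real.cos_pos_of_mem_Ioo ⟨by linarith [hEmem.1, Real.pi_pos], by linarith [hEmem.2, Real.pi_pos]⟩
  have hRpos : 0 < ρ p := by
    have h1' := hρ₁pos p hp; have h2' := hρ₂pos p hp
    simp only [hρ]; linarith
  have pyth : Real.sin (η p / 2) ^ 2 + Real.cos (η p / 2) ^ 2 = 1 :=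
    Real.sin_sq_add_cos_sq (η p / 2)
  have hsinE : Real.sin (η p) = 2 * (Real.sin (η p / 2) * Real.cos (η p / 2)) := by
    nth_rewrite 1 [show η p = 2 * (η p / 2) by ring]
    rw [Real.sin_two_mul]; ring
  have hcosE : Real.cos (η p) = Real.cos (η p / 2) ^ 2 - Real.sin (η p / 2) ^ 2 := by
    nth_rewrite 1 [show η p = 2 * (η p / 2) by ring]
    rw [Real.cos_two_mul]
    linear_combination pyth
  have hsqrt : Real.sqrt (ρ₁ p * ρ₂ p) = ρ p * (Real.sin (η p / 2) * Real.cos (η p / 2)) := by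
    rw [hη₁ p hp, hη₂ p hp,
      show ρ p * Real.cos (η p / 2) ^ 2 * (ρ p * Real.sin (η p / 2) ^ 2)
        = (ρ p * (Real.sin (η p / 2) * Real.cos (η p / 2))) ^ 2 by ring]
    exact Real.sqrt_sq (mul_nonneg hRpos.le (mul_nonneg hspos.le hcpos.le))
  -- derivative facts for the elementary functions
  have hgsin2 : HasDerivAt (fun x : ℝ => Real.sin (x / 2) ^ 2)
      (Real.sin (η p / 2) * Real.cos (η p / 2)) (η p) := by
    have h1' : HasDerivAt (fun x : ℝ => x / 2) ((1 : ℝ) / 2) (η p) :=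
      (hasDerivAt_id (η p)).div_const 2
    have h2' : HasDerivAt (fun x : ℝ => Real.sin (x / 2)) (Real.cos (η p / 2) * (1 / 2)) (η p) :=
      h1'.sin
    have h3' := h2'.fun_pow 2
    refine h3'.congr_deriv ?_
    norm_num; ring
  have hgcos2 : HasDerivAt (fun x : ℝ => Real.cos (x / 2) ^ 2)
      (-(Real.sin (η p / 2) * Real.cos (η p / 2))) (η p) := by
    have h1' : HasDerivAt (fun x : ℝ => x / 2) ((1 : ℝ) / 2) (η p) :=
      (hasDerivAt_id (η p)).div_const 2
    have h2' : HasDerivAt (fun x : ℝ => Real.cos (x / 2)) (-Real.sin (η p / 2) * (1 / 2)) (η p) :=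
      h1'.cos
    have h3' := h2'.fun_pow 2
    refine h3'.congr_deriv ?_
    norm_num; ring
  have hgsinsq : HasDerivAt (fun x : ℝ => Real.sin x ^ 2)
      (2 * (Real.sin (η p) * Real.cos (η p))) (η p) := by
    have h3' := (Real.hasDerivAt_sin (η p)).fun_pow 2
    refine h3'.congr_deriv ?_
    norm_num; ring
  -- eventual equalities
  have hev1 : ρ₁ =ᶠ[nhds p] fun y => ρ y * Real.cos (η y / 2) ^ 2 :=
    Filter.eventuallyEq_of_mem (hU.mem_nhds hp) (fun y hy => hη₁ y hy)
  have hev2 : ρ₂ =ᶠ[nhds p] fun y => ρ y * Real.sin (η y / 2) ^ 2 :=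
    Filter.eventuallyEq_of_mem (hU.mem_nhds hp) (fun y hy => hη₂ y hy)
  -- key derivative relations
  have hρ₁x : ∀ i, pdx i ρ₁ p = Real.cos (η p / 2) ^ 2 * pdx i ρ p
      + (ρ p * -(Real.sin (η p / 2) * Real.cos (η p / 2))) * pdx i η p := by
    intro i
    rw [pdx_fderiv dρ₁ i, pdx_fderiv dρ i, pdx_fderiv dη i]
    exact key_fderiv hev1 dρ dη hgcos2 _
  have hρ₂x : ∀ i, pdx i ρ₂ p = Real.sin (η p / 2) ^ 2 * pdx i ρ p
      + (ρ p * (Real.sin (η p / 2) * Real.cos (η p / 2))) * pdx i η p := by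
    intro i
    rw [pdx_fderiv dρ₂ i, pdx_fderiv dρ i, pdx_fderiv dη i]
    exact key_fderiv hev2 dρ dη hgsin2 _
  have hρ₂t : pdt ρ₂ p = Real.sin (η p / 2) ^ 2 * pdt ρ p
      + (ρ p * (Real.sin (η p / 2) * Real.cos (η p / 2))) * pdt η p := by
    rw [pdt_fderiv dρ₂, pdt_fderiv dρ, pdt_fderiv dη]
    exact key_fderiv hev2 dρ dη hgsin2 _
  have hdtρ : pdt ρ p = pdt ρ₁ p + pdt ρ₂ p := by
    have hf : fderiv ℝ ρ p = fderiv ℝ ρ₁ p + fderiv ℝ ρ₂ p := by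
      rw [hρ]; exact fderiv_add dρ₁ dρ₂
    rw [pdt_fderiv dρ, pdt_fderiv dρ₁, pdt_fderiv dρ₂, hf]; simp
  have hdte : ρ p * (Real.sin (η p / 2) * Real.cos (η p / 2)) * pdt η p
      = Real.cos (η p / 2) ^ 2 * pdt ρ₂ p - Real.sin (η p / 2) ^ 2 * pdt ρ₁ p := by
    rw [hdtρ] at hρ₂t
    linear_combination -hρ₂t - pdt ρ₂ p * pyth
  -- relations for φ
  have hφx : ∀ y ∈ Ω ×ˢ (Set.univ : Set ℝ), ∀ i,
      pdx i φ y = (pdx i θ₂ y - pdx i θ₁ y) / hbar := by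
    intro y hy i
    rw [hφ]
    rw [pdx_div_const (fun y' => θ₂ y' - θ₁ y') hbar
      ((diffAt hU hθ₂s hy).sub (diffAt hU hθ₁s hy)) i]
    rw [pdx_sub θ₂ θ₁ (diffAt hU hθ₂s hy) (diffAt hU hθ₁s hy) i]
  have hφxx : ∀ i, pdx i (fun y => pdx i φ y) p
      = (pdx i (fun y => pdx i θ₂ y) p - pdx i (fun y => pdx i θ₁ y) p) / hbar := by
    intro i
    have hev : (fun y => pdx i φ y) =ᶠ[nhds p]
        (fun y => (pdx i θ₂ y - pdx i θ₁ y) / hbar) :=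
      Filter.eventuallyEq_of_mem (hU.mem_nhds hp) (fun y hy => hφx y hy i)
    rw [pdx_congr hev i,
      pdx_div_const (fun y => pdx i θ₂ y - pdx i θ₁ y) hbar ((dGθ₂ i).sub (dGθ₁ i)) i,
      pdx_sub (fun y => pdx i θ₂ y) (fun y => pdx i θ₁ y) (dGθ₂ i) (dGθ₁ i) i]
  -- divergence expansions
  have hD1 : divx (fun y i => ρ₁ y * (pdx i θ₁ y - q * A y i)) p
      = ∑ i, (pdx i ρ₁ p * (pdx i θ₁ p - q * A p i)
          + ρ₁ p * (pdx i (fun y => pdx i θ₁ y) p - q * pdx i (fun y => A y i) p)) := by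
    simp only [divx]
    refine Finset.sum_congr rfl fun i _ => ?_
    rw [pdx_mul ρ₁ (fun y => pdx i θ₁ y - q * A y i) dρ₁
        ((dGθ₁ i).sub ((dA i).const_mul q)) i,
      pdx_sub (fun y => pdx i θ₁ y) (fun y => q * A y i) (dGθ₁ i) ((dA i).const_mul q) i,
      pdx_const_mul (fun y => A y i) q (dA i) i]
  have hD2 : divx (fun y i => ρ₂ y * (pdx i θ₂ y - q * A y i)) p
      = ∑ i, (pdx i ρ₂ p * (pdx i θ₂ p - q * A p i)
          + ρ₂ p * (pdx i (fun y => pdx i θ₂ y) p - q * pdx i (fun y => A y i) p)) := by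
    simp only [divx]
    refine Finset.sum_congr rfl fun i _ => ?_
    rw [pdx_mul ρ₂ (fun y => pdx i θ₂ y - q * A y i) dρ₂
        ((dGθ₂ i).sub ((dA i).const_mul q)) i,
      pdx_sub (fun y => pdx i θ₂ y) (fun y => q * A y i) (dGθ₂ i) ((dA i).const_mul q) i,
      pdx_const_mul (fun y => A y i) q (dA i) i]
  have hDφ : divx (fun y i => ρ y * Real.sin (η y) ^ 2 * pdx i φ y) p
      = (∑ i, ((pdx i ρ p * Real.sin (η p) ^ 2
            + ρ p * (2 * (Real.sin (η p) * Real.cos (η p))) * pdx i η p)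
            * (pdx i θ₂ p - pdx i θ₁ p)
          + ρ p * Real.sin (η p) ^ 2
            * (pdx i (fun y => pdx i θ₂ y) p - pdx i (fun y => pdx i θ₁ y) p))) / hbar := by
    simp only [divx]
    rw [Finset.sum_div]
    refine Finset.sum_congr rfl fun i _ => ?_
    rw [pdx_mul (fun y => ρ y * Real.sin (η y) ^ 2) (fun y => pdx i φ y)
        (dρ.mul dsin2) (dGφ i) i,
      pdx_mul ρ (fun y => Real.sin (η y) ^ 2) dρ dsin2 i,
      pdx_comp η (fun x => Real.sin x ^ 2) (2 * (Real.sin (η p) * Real.cos (η p))) hgsinsq dη i,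
      hφx p hp i, hφxx i]
    ring
  -- the u-sum
  have hSu : (∑ i, u p i * pdx i η p)
      = (∑ i, ((ρ p * Real.cos (η p / 2) ^ 2 * pdx i θ₁ p
          + ρ p * Real.sin (η p / 2) ^ 2 * pdx i θ₂ p - q * ρ p * A p i) * pdx i η p))
        / (m * ρ p) := by
    rw [Finset.sum_div]
    refine Finset.sum_congr rfl fun i _ => ?_
    simp only [hu]
    rw [hη₁ p hp, hη₂ p hp]
    field_simp
  -- the central sum identity
  have hsum : 4 * (Real.sin (η p / 2) ^ 2
        * (∑ i, (pdx i ρ₁ p * (pdx i θ₁ p - q * A p i)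
            + ρ₁ p * (pdx i (fun y => pdx i θ₁ y) p - q * pdx i (fun y => A y i) p)))
      - Real.cos (η p / 2) ^ 2
        * (∑ i, (pdx i ρ₂ p * (pdx i θ₂ p - q * A p i)
            + ρ₂ p * (pdx i (fun y => pdx i θ₂ y) p - q * pdx i (fun y => A y i) p)))
      + (Real.sin (η p / 2) * Real.cos (η p / 2))
        * (∑ i, ((ρ p * Real.cos (η p / 2) ^ 2 * pdx i θ₁ p
            + ρ p * Real.sin (η p / 2) ^ 2 * pdx i θ₂ p - q * ρ p * A p i) * pdx i η p)))
      = -(∑ i, ((pdx i ρ p * Real.sin (η p) ^ 2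
            + ρ p * (2 * (Real.sin (η p) * Real.cos (η p))) * pdx i η p)
            * (pdx i θ₂ p - pdx i θ₁ p)
          + ρ p * Real.sin (η p) ^ 2
            * (pdx i (fun y => pdx i θ₂ y) p - pdx i (fun y => pdx i θ₁ y) p))) := by
    rw [Finset.mul_sum, Finset.mul_sum, Finset.mul_sum, ← Finset.sum_sub_distrib,
      ← Finset.sum_add_distrib, ← Finset.sum_neg_distrib, Finset.mul_sum]
    refine Finset.sum_congr rfl fun i _ => ?_
    rw [hρ₁x i, hρ₂x i, hη₁ p hp, hη₂ p hp, hsinE, hcosE]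
    linear_combination (4 * q * A p i * ρ p * Real.sin (η p / 2) * Real.cos (η p / 2)
      * pdx i η p) * pyth
  -- finish
  have h1p := h1 p hp
  have h2p := h2 p hp
  rw [hD1, hsqrt] at h1p
  rw [hD2, hsqrt] at h2p
  exact assemble m hbar q (ρ p) (Real.sin (η p / 2)) (Real.cos (η p / 2)) (Real.sin (η p))
    (B1 p * Real.sin (φ p) - B2 p * Real.cos (φ p)) _ _ _ _
    (pdt η p) (pdt ρ₁ p) (pdt ρ₂ p) _ _
    hm.ne' hhbar.ne' hRpos.ne' hspos.ne' hcpos.ne'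
    hsinE pyth hdte h1p h2p hsum hSu hDφ


end
end
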